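/- Lipschitz-type estimate for the bundle projection: Let ((a b; c d), (i,j)) and ((r s; t u), (k,l)) be elements of HL(D). Then ‖ P_{i,j}[a + bi + cj + dij] − P_{k,l}[r + sk + tl + ukl] ‖_{A_i(𝔹⁴)} ≤ 8 ( 1 + ‖r‖_{L²(D)} + ‖s‖_{L²(D)} + ‖t‖_{L²(D)} + ‖u‖_{L²(D)} ) · d( ((a b; c d),(i,j)), ((r s; t u),(k,l)) ), where d is the metric of HL(D). -/

import Mathlib

noncomputable section

open MeasureTheory Filter

notation "ℍ" => Quaternion ℝ

/-- The set of pure imaginary unit quaternions `𝕊²`. -/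
def Sph2 (i : ℍ) : Prop := i.re = 0 ∧ ‖i‖ = 1

/-- Ordered pairs of orthogonal pure imaginary unit quaternions (the set `T`). -/
def OrthPair (i j : ℍ) : Prop := Sph2 i ∧ Sph2 j ∧ (i * star j).re = 0

/-- The slice complex plane `ℂ(i) = {x + y i}`. -/
def CC (i : ℍ) : Set ℍ := {q | ∃ x y : ℝ, q = (x : ℍ) + y • i}

/-- Slice regularity of `f` on `Ω`: real differentiability together with the
Cauchy–Riemann condition `½(∂/∂x + i ∂/∂y) f = 0` on every slice. -/
def SliceRegularOn (f : ℍ → ℍ) (Ω : Set ℍ) : Prop :=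
  ∀ ⦃i : ℍ⦄, Sph2 i → ∀ x y : ℝ, ((x : ℍ) + y • i) ∈ Ω →
    DifferentiableAt ℝ f ((x : ℍ) + y • i) ∧
    fderiv ℝ f ((x : ℍ) + y • i) 1 + i * fderiv ℝ f ((x : ℍ) + y • i) i = 0

/-- Axially symmetric slice domain. -/
structure AxSymSDomain (Ω : Set ℍ) : Prop where
  isOpen : IsOpen Ω
  isConnected : IsConnected Ω
  real_nonempty : (Ω ∩ Set.range ((↑) : ℝ → ℍ)).Nonempty
  slice_connected : ∀ ⦃i : ℍ⦄, Sph2 i →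
    IsConnected {p : ℝ × ℝ | ((p.1 : ℍ) + p.2 • i) ∈ Ω}
  axial : ∀ (x y : ℝ) ⦃i : ℍ⦄, Sph2 i → ((x : ℍ) + y • i) ∈ Ω →
    ∀ ⦃j : ℍ⦄, Sph2 j → ((x : ℍ) + y • j) ∈ Ω

/-- The slice `Ω ∩ ℂ(i)` as a subset of `ℝ²`. -/
def sliceSet (Ω : Set ℍ) (i : ℍ) : Set (ℝ × ℝ) := {p | ((p.1 : ℍ) + p.2 • i) ∈ Ω}

/-- `‖f‖²_{A_i(Ω)} = ∫_{Ω ∩ ℂ(i)} ‖f‖² dσ_i`. -/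
def bergmanNormSq (Ω : Set ℍ) (i : ℍ) (f : ℍ → ℍ) : ℝ :=
  ∫ p in sliceSet Ω i, ‖f ((p.1 : ℍ) + p.2 • i)‖ ^ 2

/-- The slice regular Bergman norm `‖f‖_{A_i(Ω)}`. -/
def bergmanNorm (Ω : Set ℍ) (i : ℍ) (f : ℍ → ℍ) : ℝ :=
  Real.sqrt (bergmanNormSq Ω i f)

/-- Membership in the slice regular Bergman space `A_i(Ω)`. -/
def MemBergman (Ω : Set ℍ) (i : ℍ) (f : ℍ → ℍ) : Prop :=
  SliceRegularOn f Ω ∧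
  IntegrableOn (fun p : ℝ × ℝ => ‖f ((p.1 : ℍ) + p.2 • i)‖ ^ 2) (sliceSet Ω i)

/-- The quaternionic Bergman inner product `⟨f,g⟩ = ∫ conj(f) g dσ_i`. -/
def bergmanInner (Ω : Set ℍ) (i : ℍ) (f g : ℍ → ℍ) : ℍ :=
  ∫ p in sliceSet Ω i, star (f ((p.1 : ℍ) + p.2 • i)) * g ((p.1 : ℍ) + p.2 • i)

/-- The open unit ball `𝔹⁴ ⊆ ℍ`. -/
def B4 : Set ℍ := {q | ‖q‖ < 1}

/-- The open unit disk `D ⊆ ℝ²`. -/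
def unitDisk : Set (ℝ × ℝ) := {p | p.1 ^ 2 + p.2 ^ 2 < 1}

/-- `‖f‖²_{A_i(𝔹⁴)} = ∫_D ‖f(x + yi)‖² dμ(x,y)`. -/
def bergNormSqB (i : ℍ) (f : ℍ → ℍ) : ℝ :=
  ∫ p in unitDisk, ‖f ((p.1 : ℍ) + p.2 • i)‖ ^ 2

/-- The Bergman norm on `A_i(𝔹⁴)`. -/
def bergNormB (i : ℍ) (f : ℍ → ℍ) : ℝ := Real.sqrt (bergNormSqB i f)

/-- Membership in `A_i(𝔹⁴)`. -/
def MemBergB (i : ℍ) (f : ℍ → ℍ) : Prop :=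
  SliceRegularOn f B4 ∧
  IntegrableOn (fun p : ℝ × ℝ => ‖f ((p.1 : ℍ) + p.2 • i)‖ ^ 2) unitDisk

open Classical in
/-- `I_q`: the imaginary unit direction of `q` (an arbitrary fixed unit when `q` is real). -/
def Imu (q : ℍ) : ℍ := if q.im = 0 then ⟨0, 1, 0, 0⟩ else ‖q.im‖⁻¹ • q.im

/-- The extension operator `P_{k,·}`: for a slice function `g : ℝ² → ℍ` (representing
`x + y k ↦ g(x,y)`), `Pext k g (q) = ½[(1 + I_q k) g(x, −y) + (1 − I_q k) g(x, y)]`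
where `q = x + I_q y`, `y = ‖im q‖ ≥ 0`. -/
def Pext (k : ℍ) (g : ℝ × ℝ → ℍ) (q : ℍ) : ℍ :=
  (2⁻¹ : ℝ) • ((1 + Imu q * k) * g (q.re, -‖q.im‖) + (1 - Imu q * k) * g (q.re, ‖q.im‖))

/-- The slice function `x + y k ↦ a + b k + c l + d kl`. -/
def sliceFun (a b c d : ℝ × ℝ → ℝ) (k l : ℍ) (p : ℝ × ℝ) : ℍ :=
  (a p : ℍ) + b p • k + c p • l + d p • (k * l)

/-- `L²(D)` norm of a real function on the unit disk. -/
def L2D (a : ℝ × ℝ → ℝ) : ℝ := Real.sqrt (∫ p in unitDisk, a p ^ 2)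

/-- Finiteness of the `L²(D)` norm. -/
def MemL2D (a : ℝ × ℝ → ℝ) : Prop := IntegrableOn (fun p => a p ^ 2) unitDisk

/-- Harmonicity on the unit disk: `a` is `C²` and `∂²a/∂x² + ∂²a/∂y² = 0`. -/
def HarmonicOnDisk (a : ℝ × ℝ → ℝ) : Prop :=
  ContDiffOn ℝ 2 a unitDisk ∧ ∀ p ∈ unitDisk,
    fderiv ℝ (fun q => fderiv ℝ a q (1, 0)) p (1, 0)
      + fderiv ℝ (fun q => fderiv ℝ a q (0, 1)) p (0, 1) = 0

/-- `(a,b)` is a pair of conjugate harmonic functions on `D`: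
both harmonic and satisfying the Cauchy–Riemann equations. -/
def ConjHarmPair (a b : ℝ × ℝ → ℝ) : Prop :=
  HarmonicOnDisk a ∧ HarmonicOnDisk b ∧
  ∀ p ∈ unitDisk,
    fderiv ℝ a p (1, 0) = fderiv ℝ b p (0, 1) ∧
    fderiv ℝ a p (0, 1) = -fderiv ℝ b p (1, 0)

/-- `(a,b) ∈ HL²(D)`. -/
def HLpair (a b : ℝ × ℝ → ℝ) : Prop := ConjHarmPair a b ∧ MemL2D a ∧ MemL2D b

/-- Raw data of an element of `HL(D)`: a 2×2 matrix `(a b; c d)` of real functions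
on the disk together with a pair `(k,l)` of quaternions. -/
structure HLElem where
  a : ℝ × ℝ → ℝ
  b : ℝ × ℝ → ℝ
  c : ℝ × ℝ → ℝ
  d : ℝ × ℝ → ℝ
  k : ℍ
  l : ℍ

/-- Membership in `HL(D)`: `(a,b),(c,d) ∈ HL²(D)` and `(k,l) ∈ T`. -/
def HLElem.mem (A : HLElem) : Prop := HLpair A.a A.b ∧ HLpair A.c A.d ∧ OrthPair A.k A.l

/-- The bundle projection `P_{𝔹⁴}((a b; c d),(k,l)) = P_{k,l}[a + bk + cl + dkl]`. -/
def HLElem.proj (A : HLElem) : ℍ → ℍ := Pext A.k (sliceFun A.a A.b A.c A.d A.k A.l)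

/-- The metric of `HL(D)`. -/
def HLdist (A B : HLElem) : ℝ :=
  L2D (A.a - B.a) + L2D (A.b - B.b) + L2D (A.c - B.c) + L2D (A.d - B.d)
    + Real.sqrt (‖A.k - B.k‖ ^ 2 + ‖A.l - B.l‖ ^ 2)

/-- `Q_{k,l}[f] : (x,y) ↦ f(x + y k)`, the restriction of `f` to the slice `ℂ(k)`. -/
def Qsl (f : ℍ → ℍ) (k : ℍ) (p : ℝ × ℝ) : ℍ := f ((p.1 : ℍ) + p.2 • k)

/-- `D₁[f,k,l] = (Q[f] + conj(Q[f]))/2 = Re (Q[f])`. -/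
def Dc1 (f : ℍ → ℍ) (k _l : ℍ) (p : ℝ × ℝ) : ℝ := (Qsl f k p).re

/-- `D₂[f,k,l] = −(Q[f]·k + conj(Q[f]·k))/2 = −Re (Q[f]·k)`. -/
def Dc2 (f : ℍ → ℍ) (k _l : ℍ) (p : ℝ × ℝ) : ℝ := -(Qsl f k p * k).re

/-- `D₃[f,k,l] = −(Q[f]·l + conj(Q[f]·l))/2 = −Re (Q[f]·l)`. -/
def Dc3 (f : ℍ → ℍ) (k l : ℍ) (p : ℝ × ℝ) : ℝ := -(Qsl f k p * l).re

/-- `D₄[f,k,l] = (Q[f]·lk + conj(Q[f]·lk))/2 = Re (Q[f]·(lk))`. -/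
def Dc4 (f : ℍ → ℍ) (k l : ℍ) (p : ℝ × ℝ) : ℝ := (Qsl f k p * (l * k)).re

/-- The section map `S_{k,l}[f] = ((D₁ D₂; D₃ D₄), (k,l))`. -/
def Smap (f : ℍ → ℍ) (k l : ℍ) : HLElem :=
  ⟨Dc1 f k l, Dc2 f k l, Dc3 f k l, Dc4 f k l, k, l⟩

/-- The metric `ρ_i` on `A_i(𝔹⁴) × T`. -/
def rhoA (i : ℍ) (f : ℍ → ℍ) (k l : ℍ) (g : ℍ → ℍ) (m n : ℍ) : ℝ :=
  bergNormB i (f - g) + Real.sqrt (‖k - m‖ ^ 2 + ‖l - n‖ ^ 2)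

section ProjLipAux

open ENNReal

lemma sph2_ne_zero {i : ℍ} (h : Sph2 i) : i ≠ 0 := by
  intro h0
  have h2 := h.2
  rw [h0, norm_zero] at h2
  exact one_ne_zero h2.symm

lemma sph2_mul_self {i : ℍ} (h : Sph2 i) : i * i = -1 := by
  have hstar : star i = -i := Quaternion.star_eq_neg.mpr h.1
  have h2 : i * star i = ((Quaternion.normSq i : ℝ) : ℍ) := Quaternion.self_mul_star i
  have h3 : Quaternion.normSq i = 1 := by
    rw [Quaternion.normSq_eq_norm_mul_self, h.2, one_mul]
  rw [hstar, mul_neg, h3] at h2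
  have h4 := congrArg Neg.neg h2
  simpa using h4

lemma slice_re {i : ℍ} (hi : i.re = 0) (x y : ℝ) : ((x : ℍ) + y • i).re = x := by
  simp [hi]

lemma slice_im {i : ℍ} (hi : i.re = 0) (x y : ℝ) : ((x : ℍ) + y • i).im = y • i := by
  ext <;> simp [hi]

lemma alg1 {i : ℍ} (hii : i * i = -1) (k u v : ℍ) :
    (2⁻¹ : ℝ) • ((1 + i * k) * u + (1 - i * k) * v)
      = v + (2⁻¹ : ℝ) • (i * (k - i) * (u - v)) := by
  have h : i * (k - i) = 1 + i * k := by rw [mul_sub, hii, sub_neg_eq_add, add_comm]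
  rw [h]
  simp only [add_mul, sub_mul, one_mul, mul_sub]
  module

lemma alg2 {i : ℍ} (hii : i * i = -1) (k u v : ℍ) :
    (2⁻¹ : ℝ) • ((1 - i * k) * v + (1 + i * k) * u)
      = v + (2⁻¹ : ℝ) • (i * (k - i) * (u - v)) := by
  rw [add_comm]; exact alg1 hii k u v

lemma Imu_slice_pos {i : ℍ} (hi : Sph2 i) {y : ℝ} (hy : 0 < y) (x : ℝ) :
    Imu ((x : ℍ) + y • i) = i := by
  unfold Imu
  rw [slice_im hi.1]
  split_ifs with h0
  · exact absurd h0 (by simp [smul_eq_zero, sph2_ne_zero hi, hy.ne'])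
  rw [norm_smul, hi.2, Real.norm_eq_abs, mul_one, abs_of_pos hy, smul_smul,
    inv_mul_cancel₀ hy.ne', one_smul]
  exact if_neg h0

lemma Imu_slice_neg {i : ℍ} (hi : Sph2 i) {y : ℝ} (hy : y < 0) (x : ℝ) :
    Imu ((x : ℍ) + y • i) = -i := by
  unfold Imu
  rw [slice_im hi.1]
  split_ifs with h0
  · exact absurd h0 (by simp [smul_eq_zero, sph2_ne_zero hi, hy.ne])
  rw [norm_smul, hi.2, Real.norm_eq_abs, mul_one, abs_of_neg hy, smul_smul,
    show (-y)⁻¹ * y = -1 by rw [inv_neg, neg_mul, inv_mul_cancel₀ hy.ne], neg_one_smul]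
  exact if_neg h0

lemma Pext_slice (g : ℝ × ℝ → ℍ) {i : ℍ} (hi : Sph2 i) (k : ℍ) (x y : ℝ) :
    Pext k g ((x : ℍ) + y • i)
      = g (x, y) + (2⁻¹ : ℝ) • (i * (k - i) * (g (x, -y) - g (x, y))) := by
  have hii := sph2_mul_self hi
  have hre := slice_re hi.1 x y
  have hnim : ‖((x : ℍ) + y • i).im‖ = |y| := by
    rw [slice_im hi.1, norm_smul, hi.2, mul_one, Real.norm_eq_abs]
  unfold Pext
  rw [hre, hnim]
  rcases lt_trichotomy y 0 with hy | rfl | hy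
  · rw [Imu_slice_neg hi hy x, abs_of_neg hy, neg_neg, neg_mul, ← sub_eq_add_neg,
      sub_neg_eq_add]
    exact alg2 hii k (g (x, -y)) (g (x, y))
  · simp only [abs_zero, neg_zero, sub_self, mul_zero, smul_zero, add_zero]
    simp only [add_mul, sub_mul, one_mul]
    module
  · rw [Imu_slice_pos hi hy x, abs_of_pos hy]
    exact alg1 hii k (g (x, -y)) (g (x, y))

lemma norm_slice_le {k l : ℍ} (hk : ‖k‖ = 1) (hl : ‖l‖ = 1) (r s t u : ℝ) :
    ‖(r : ℍ) + s • k + t • l + u • (k * l)‖ ≤ |r| + |s| + |t| + |u| := by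
  have h1 : ‖(r : ℍ)‖ = |r| := by rw [Quaternion.norm_coe, Real.norm_eq_abs]
  have h2 : ‖s • k‖ = |s| := by rw [norm_smul, hk, mul_one, Real.norm_eq_abs]
  have h3 : ‖t • l‖ = |t| := by rw [norm_smul, hl, mul_one, Real.norm_eq_abs]
  have h4 : ‖u • (k * l)‖ = |u| := by
    rw [norm_smul, norm_mul, hk, hl, mul_one, mul_one, Real.norm_eq_abs]
  calc ‖(r : ℍ) + s • k + t • l + u • (k * l)‖
      ≤ ‖(r : ℍ) + s • k + t • l‖ + ‖u • (k * l)‖ := norm_add_le _ _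
    _ ≤ ‖(r : ℍ) + s • k‖ + ‖t • l‖ + ‖u • (k * l)‖ := by
        gcongr; exact norm_add_le _ _
    _ ≤ ‖(r : ℍ)‖ + ‖s • k‖ + ‖t • l‖ + ‖u • (k * l)‖ := by
        gcongr; exact norm_add_le _ _
    _ = |r| + |s| + |t| + |u| := by rw [h1, h2, h3, h4]

lemma norm_mul_sub_mul {i j k l : ℍ} (hj : ‖j‖ = 1) (hk : ‖k‖ = 1) :
    ‖i * j - k * l‖ ≤ ‖i - k‖ + ‖j - l‖ := by
  have h : i * j - k * l = (i - k) * j + k * (j - l) := by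
    rw [sub_mul, mul_sub]; abel
  rw [h]
  calc ‖(i - k) * j + k * (j - l)‖ ≤ ‖(i - k) * j‖ + ‖k * (j - l)‖ := norm_add_le _ _
    _ = ‖i - k‖ + ‖j - l‖ := by rw [norm_mul, norm_mul, hj, hk, mul_one, one_mul]

lemma norm_bound {i j k l : ℍ} (hi : ‖i‖ = 1) (hj : ‖j‖ = 1) (hk : ‖k‖ = 1) (hl : ‖l‖ = 1)
    {δ : ℝ} (hd1 : ‖i - k‖ ≤ δ) (hd2 : ‖j - l‖ ≤ δ)
    (a b c d r s t u r' s' t' u' : ℝ) :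
    ‖((a : ℍ) + b • i + c • j + d • (i * j)) - ((r : ℍ) + s • k + t • l + u • (k * l))
        - (2⁻¹ : ℝ) • (i * (k - i) *
          (((r' : ℍ) + s' • k + t' • l + u' • (k * l))
            - ((r : ℍ) + s • k + t • l + u • (k * l))))‖
      ≤ (|a - r| + |b - s| + |c - t| + |d - u|)
        + 3 * δ * (|r| + |s| + |t| + |u|) + δ * (|r'| + |s'| + |t'| + |u'|) := by
  have hδ0 : 0 ≤ δ := le_trans (norm_nonneg _) hd1
  set X : ℍ := ((a : ℍ) + b • i + c • j + d • (i * j))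
    - ((r : ℍ) + s • k + t • l + u • (k * l)) with hXdef
  set Y : ℍ := (2⁻¹ : ℝ) • (i * (k - i) *
    (((r' : ℍ) + s' • k + t' • l + u' • (k * l))
      - ((r : ℍ) + s • k + t • l + u • (k * l)))) with hYdef
  have hXeq : X = ((a - r : ℝ) : ℍ) + (b - s) • i + (c - t) • j + (d - u) • (i * j)
      + s • (i - k) + t • (j - l) + u • (i * j - k * l) := by
    rw [hXdef]; push_cast; module
  have hX : ‖X‖ ≤ |a - r| + |b - s| + |c - t| + |d - u| + |s| * δ + |t| * δ + |u| * (δ + δ) := by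
    rw [hXeq]
    have n1 : ‖((a - r : ℝ) : ℍ)‖ = |a - r| := by rw [Quaternion.norm_coe, Real.norm_eq_abs]
    have n2 : ‖(b - s) • i‖ = |b - s| := by rw [norm_smul, hi, mul_one, Real.norm_eq_abs]
    have n3 : ‖(c - t) • j‖ = |c - t| := by rw [norm_smul, hj, mul_one, Real.norm_eq_abs]
    have n4 : ‖(d - u) • (i * j)‖ = |d - u| := by
      rw [norm_smul, norm_mul, hi, hj, mul_one, mul_one, Real.norm_eq_abs]
    have n5 : ‖s • (i - k)‖ ≤ |s| * δ := by
      rw [norm_smul, Real.norm_eq_abs]; exact mul_le_mul_of_nonneg_left hd1 (abs_nonneg _)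
    have n6 : ‖t • (j - l)‖ ≤ |t| * δ := by
      rw [norm_smul, Real.norm_eq_abs]; exact mul_le_mul_of_nonneg_left hd2 (abs_nonneg _)
    have n7 : ‖u • (i * j - k * l)‖ ≤ |u| * (δ + δ) := by
      rw [norm_smul, Real.norm_eq_abs]
      exact mul_le_mul_of_nonneg_left
        (le_trans (norm_mul_sub_mul hj hk) (by linarith)) (abs_nonneg _)
    calc ‖((a - r : ℝ) : ℍ) + (b - s) • i + (c - t) • j + (d - u) • (i * j)
          + s • (i - k) + t • (j - l) + u • (i * j - k * l)‖
        ≤ ‖((a - r : ℝ) : ℍ) + (b - s) • i + (c - t) • j + (d - u) • (i * j)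
          + s • (i - k) + t • (j - l)‖ + ‖u • (i * j - k * l)‖ := norm_add_le _ _
      _ ≤ ‖((a - r : ℝ) : ℍ) + (b - s) • i + (c - t) • j + (d - u) • (i * j)
          + s • (i - k)‖ + ‖t • (j - l)‖ + ‖u • (i * j - k * l)‖ := by
          gcongr; exact norm_add_le _ _
      _ ≤ ‖((a - r : ℝ) : ℍ) + (b - s) • i + (c - t) • j + (d - u) • (i * j)‖
          + ‖s • (i - k)‖ + ‖t • (j - l)‖ + ‖u • (i * j - k * l)‖ := by
          gcongr; exact norm_add_le _ _
      _ ≤ ‖((a - r : ℝ) : ℍ) + (b - s) • i + (c - t) • j‖ + ‖(d - u) • (i * j)‖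
          + ‖s • (i - k)‖ + ‖t • (j - l)‖ + ‖u • (i * j - k * l)‖ := by
          gcongr; exact norm_add_le _ _
      _ ≤ ‖((a - r : ℝ) : ℍ) + (b - s) • i‖ + ‖(c - t) • j‖ + ‖(d - u) • (i * j)‖
          + ‖s • (i - k)‖ + ‖t • (j - l)‖ + ‖u • (i * j - k * l)‖ := by
          gcongr; exact norm_add_le _ _
      _ ≤ ‖((a - r : ℝ) : ℍ)‖ + ‖(b - s) • i‖ + ‖(c - t) • j‖ + ‖(d - u) • (i * j)‖
          + ‖s • (i - k)‖ + ‖t • (j - l)‖ + ‖u • (i * j - k * l)‖ := by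
          gcongr; exact norm_add_le _ _
      _ ≤ |a - r| + |b - s| + |c - t| + |d - u| + |s| * δ + |t| * δ + |u| * (δ + δ) := by
          rw [n1, n2, n3, n4]; gcongr
  have hY : ‖Y‖ ≤ 2⁻¹ * δ * ((|r'| + |s'| + |t'| + |u'|) + (|r| + |s| + |t| + |u|)) := by
    rw [hYdef, norm_smul, Real.norm_eq_abs]
    have h1 : ‖i * (k - i) * (((r' : ℍ) + s' • k + t' • l + u' • (k * l))
        - ((r : ℍ) + s • k + t • l + u • (k * l)))‖
        ≤ δ * ((|r'| + |s'| + |t'| + |u'|) + (|r| + |s| + |t| + |u|)) := by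
      rw [norm_mul, norm_mul, hi, one_mul]
      have h2 : ‖k - i‖ ≤ δ := by rw [norm_sub_rev]; exact hd1
      have h3 : ‖((r' : ℍ) + s' • k + t' • l + u' • (k * l))
          - ((r : ℍ) + s • k + t • l + u • (k * l))‖
          ≤ (|r'| + |s'| + |t'| + |u'|) + (|r| + |s| + |t| + |u|) :=
        le_trans (norm_sub_le _ _) (add_le_add (norm_slice_le hk hl _ _ _ _)
          (norm_slice_le hk hl _ _ _ _))
      exact mul_le_mul h2 h3 (norm_nonneg _) hδ0
    calc |(2⁻¹ : ℝ)| * ‖i * (k - i) * _‖ ≤ 2⁻¹ * (δ * ((|r'| + |s'| + |t'| + |u'|)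
          + (|r| + |s| + |t| + |u|))) := by
          rw [abs_of_pos (by norm_num : (0:ℝ) < 2⁻¹)]
          exact mul_le_mul_of_nonneg_left h1 (by norm_num)
      _ = 2⁻¹ * δ * ((|r'| + |s'| + |t'| + |u'|) + (|r| + |s| + |t| + |u|)) := by ring
  have := norm_sub_le X Y
  have habs : ∀ z : ℝ, 0 ≤ |z| := fun z => abs_nonneg z
  nlinarith [habs r, habs s, habs t, habs u, habs r', habs s', habs t', habs u',
    mul_nonneg hδ0 (habs r), mul_nonneg hδ0 (habs s), mul_nonneg hδ0 (habs t),
    mul_nonneg hδ0 (habs u)]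

end ProjLipAux

section ProjLipMeasure

open ENNReal

lemma isOpen_unitDisk : IsOpen unitDisk := by
  have : unitDisk = (fun p : ℝ × ℝ => p.1 ^ 2 + p.2 ^ 2) ⁻¹' (Set.Iio 1) := rfl
  rw [this]
  exact IsOpen.preimage (by fun_prop) isOpen_Iio

lemma measurableSet_unitDisk : MeasurableSet unitDisk := isOpen_unitDisk.measurableSet

/-- auxiliary `L²`-type quantity in `ℝ≥0∞`. -/
def Jh (f : ℝ × ℝ → ℝ≥0∞) : ℝ≥0∞ := (∫⁻ p in unitDisk, f p ^ (2 : ℝ)) ^ (1 / 2 : ℝ)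

lemma Jh_mono {f g : ℝ × ℝ → ℝ≥0∞} (h : ∀ p, f p ≤ g p) : Jh f ≤ Jh g :=
  ENNReal.rpow_le_rpow
    (MeasureTheory.lintegral_mono fun p => ENNReal.rpow_le_rpow (h p) (by norm_num))
    (by norm_num)

lemma Jh_add_le {f g : ℝ × ℝ → ℝ≥0∞}
    (hf : AEMeasurable f (MeasureTheory.volume.restrict unitDisk))
    (hg : AEMeasurable g (MeasureTheory.volume.restrict unitDisk)) :
    Jh (fun p => f p + g p) ≤ Jh f + Jh g :=
  ENNReal.lintegral_Lp_add_le hf hg one_le_two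

lemma Jh_sum : ∀ {n : ℕ} (f : Fin n → ℝ × ℝ → ℝ≥0∞),
    (∀ m, AEMeasurable (f m) (MeasureTheory.volume.restrict unitDisk)) →
    Jh (fun p => ∑ m, f m p) ≤ ∑ m, Jh (f m) := by
  intro n
  induction n with
  | zero =>
    intro f _
    simp only [Finset.univ_eq_empty, Finset.sum_empty]
    refine le_of_eq ?_
    unfold Jh
    rw [MeasureTheory.lintegral_congr
      (fun p : ℝ × ℝ => ENNReal.zero_rpow_of_pos (show (0:ℝ) < 2 by norm_num)),
      MeasureTheory.lintegral_zero]
    exact ENNReal.zero_rpow_of_pos (by norm_num)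
  | succ n ih =>
    intro f hf
    have h1 : (fun p => ∑ m, f m p) = fun p => f 0 p + ∑ m : Fin n, f m.succ p := by
      funext p; rw [Fin.sum_univ_succ]
    rw [h1, Fin.sum_univ_succ]
    refine le_trans (Jh_add_le (hf 0) (Finset.aemeasurable_fun_sum _ fun (m : Fin n) _ => hf m.succ)) ?_
    exact add_le_add_right (ih _ fun m => hf m.succ) _

lemma Jh_const_mul (c : ℝ≥0∞) (hc : c ≠ ⊤) (f : ℝ × ℝ → ℝ≥0∞) :
    Jh (fun p => c * f p) = c * Jh f := by
  unfold Jh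
  have h1 : ∀ p : ℝ × ℝ, (c * f p) ^ (2 : ℝ) = c ^ (2 : ℝ) * f p ^ (2 : ℝ) := fun p =>
    ENNReal.mul_rpow_of_nonneg _ _ (by norm_num)
  simp_rw [h1]
  rw [MeasureTheory.lintegral_const_mul' _ _ (ENNReal.rpow_ne_top_of_nonneg (by norm_num) hc),
    ENNReal.mul_rpow_of_nonneg _ _ (by norm_num), ← ENNReal.rpow_mul]
  norm_num

lemma ofReal_sq_eq {x : ℝ} (hx : 0 ≤ x) :
    ENNReal.ofReal (x ^ 2) = ENNReal.ofReal x ^ (2 : ℝ) := by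
  rw [show (2:ℝ) = ((2:ℕ):ℝ) by norm_num, ENNReal.rpow_natCast, ENNReal.ofReal_pow hx]

lemma enn_abs_sq (x : ℝ) : (ENNReal.ofReal |x|) ^ (2 : ℝ) = (‖x ^ 2‖₊ : ℝ≥0∞) := by
  rw [← ofReal_sq_eq (abs_nonneg x), sq_abs, ← enorm_eq_nnnorm, Real.enorm_eq_ofReal_abs,
    abs_of_nonneg (sq_nonneg x)]

lemma sqrt_integral_eq (f : ℝ × ℝ → ℍ)
    (hm : MeasureTheory.AEStronglyMeasurable f (MeasureTheory.volume.restrict unitDisk)) :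
    Real.sqrt (∫ p in unitDisk, ‖f p‖ ^ 2) = (Jh (fun p => (‖f p‖₊ : ℝ≥0∞))).toReal := by
  have h1 : ∫ p in unitDisk, ‖f p‖ ^ 2
      = (∫⁻ p in unitDisk, (‖f p‖₊ : ℝ≥0∞) ^ (2 : ℝ)).toReal := by
    rw [MeasureTheory.integral_eq_lintegral_of_nonneg_ae
      (MeasureTheory.ae_of_all _ fun p => sq_nonneg _)
      ((hm.norm.mul hm.norm).congr (by
        filter_upwards with p
        simp [sq]))]
    congr 1
    apply MeasureTheory.lintegral_congr
    intro p
    rw [← enorm_eq_nnnorm, ← ofReal_norm, ← ofReal_sq_eq (norm_nonneg _)]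
  rw [h1, Jh, Real.sqrt_eq_rpow, ENNReal.toReal_rpow]

lemma Jh_ofReal_abs_eq {h : ℝ × ℝ → ℝ}
    (hm : AEMeasurable h (MeasureTheory.volume.restrict unitDisk)) (hint : MemL2D h) :
    Jh (fun p => ENNReal.ofReal |h p|) = ENNReal.ofReal (L2D h) := by
  have hI : (∫⁻ p in unitDisk, ENNReal.ofReal |h p| ^ (2 : ℝ)) ≠ ⊤ := by
    simp_rw [enn_abs_sq]
    exact hint.2.ne
  have hL : L2D h = ((∫⁻ p in unitDisk, ENNReal.ofReal |h p| ^ (2 : ℝ)) ^ (1/2 : ℝ)).toReal := by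
    unfold L2D
    have h1 : ∫ p in unitDisk, h p ^ 2
        = (∫⁻ p in unitDisk, ENNReal.ofReal |h p| ^ (2 : ℝ)).toReal := by
      rw [MeasureTheory.integral_eq_lintegral_of_nonneg_ae
        (MeasureTheory.ae_of_all _ fun p => sq_nonneg _)
        (((hm.mul hm).congr (by
          filter_upwards with p
          rw [← sq, Pi.pow_apply])).aestronglyMeasurable)]
      congr 1
      apply MeasureTheory.lintegral_congr
      intro p
      rw [← sq_abs (h p), ofReal_sq_eq (abs_nonneg _)]
    rw [h1, Real.sqrt_eq_rpow, ENNReal.toReal_rpow]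
  rw [Jh, hL, ENNReal.ofReal_toReal (ENNReal.rpow_ne_top_of_nonneg (by norm_num) hI)]

/-- reflection in the second coordinate. -/
def refl2 : ℝ × ℝ → ℝ × ℝ := fun p => (p.1, -p.2)

lemma refl2_measurePreserving :
    MeasureTheory.MeasurePreserving refl2
      (MeasureTheory.volume : MeasureTheory.Measure (ℝ × ℝ)) MeasureTheory.volume := by
  rw [MeasureTheory.Measure.volume_eq_prod]
  exact (MeasureTheory.MeasurePreserving.id MeasureTheory.volume).prod
    (MeasureTheory.Measure.measurePreserving_neg MeasureTheory.volume)

lemma refl2_measurableEmbedding : MeasurableEmbedding refl2 :=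
  ((MeasurableEquiv.refl ℝ).prodCongr (MeasurableEquiv.neg ℝ)).measurableEmbedding

lemma refl2_preimage : refl2 ⁻¹' unitDisk = unitDisk := by
  ext p
  simp [unitDisk, refl2]

lemma lint_refl (f : ℝ × ℝ → ℝ≥0∞) :
    ∫⁻ p in unitDisk, f (refl2 p) = ∫⁻ p in unitDisk, f p := by
  have := refl2_measurePreserving.setLIntegral_comp_preimage_emb
    refl2_measurableEmbedding f unitDisk
  rwa [refl2_preimage] at this

lemma Jh_refl (f : ℝ × ℝ → ℝ≥0∞) : Jh (fun p => f (refl2 p)) = Jh f := by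
  unfold Jh
  rw [lint_refl (fun p => f p ^ (2:ℝ))]

lemma memL2D_sub {a r : ℝ × ℝ → ℝ} (ha : MemL2D a) (hr : MemL2D r)
    (hca : ContinuousOn a unitDisk) (hcr : ContinuousOn r unitDisk) : MemL2D (a - r) := by
  have hm : MeasureTheory.AEStronglyMeasurable (fun p => ((a - r) p) ^ 2)
      (MeasureTheory.volume.restrict unitDisk) := by
    have h1 : AEMeasurable (fun p => a p - r p) (MeasureTheory.volume.restrict unitDisk) :=
      (hca.sub hcr).aemeasurable measurableSet_unitDisk
    exact ((h1.mul h1).congr (by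
      filter_upwards with p
      simp [sq])).aestronglyMeasurable
  refine MeasureTheory.Integrable.mono'
    (((ha.const_mul 2).add (hr.const_mul 2)) : MeasureTheory.Integrable _ _) hm ?_
  filter_upwards with p
  simp only [Pi.add_apply, Pi.sub_apply, Real.norm_eq_abs]
  rw [abs_of_nonneg (sq_nonneg _)]
  nlinarith [sq_nonneg (a p + r p)]

end ProjLipMeasure

section ProjLipMore

open ENNReal

lemma Jh_add4 (g1 g2 g3 g4 : ℝ × ℝ → ℝ≥0∞)
    (h1 : AEMeasurable g1 (MeasureTheory.volume.restrict unitDisk))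
    (h2 : AEMeasurable g2 (MeasureTheory.volume.restrict unitDisk))
    (h3 : AEMeasurable g3 (MeasureTheory.volume.restrict unitDisk))
    (h4 : AEMeasurable g4 (MeasureTheory.volume.restrict unitDisk)) :
    Jh (fun p => g1 p + g2 p + g3 p + g4 p) ≤ Jh g1 + Jh g2 + Jh g3 + Jh g4 := by
  refine le_trans (Jh_add_le ((h1.add h2).add h3) h4) ?_
  refine add_le_add_left (le_trans (Jh_add_le (h1.add h2) h3) ?_) _
  exact add_le_add_left (Jh_add_le h1 h2) _

lemma Jh_add3 (g1 g2 g3 : ℝ × ℝ → ℝ≥0∞)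
    (h1 : AEMeasurable g1 (MeasureTheory.volume.restrict unitDisk))
    (h2 : AEMeasurable g2 (MeasureTheory.volume.restrict unitDisk))
    (h3 : AEMeasurable g3 (MeasureTheory.volume.restrict unitDisk)) :
    Jh (fun p => g1 p + g2 p + g3 p) ≤ Jh g1 + Jh g2 + Jh g3 := by
  refine le_trans (Jh_add_le (h1.add h2) h3) ?_
  exact add_le_add_left (Jh_add_le h1 h2) _

lemma ofReal_split3 (x y z : ℝ) : ENNReal.ofReal (x + y + z)
    ≤ ENNReal.ofReal x + ENNReal.ofReal y + ENNReal.ofReal z :=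
  le_trans ENNReal.ofReal_add_le (add_le_add_left ENNReal.ofReal_add_le _)

lemma ofReal_split4 (x y z w : ℝ) : ENNReal.ofReal (x + y + z + w)
    ≤ ENNReal.ofReal x + ENNReal.ofReal y + ENNReal.ofReal z + ENNReal.ofReal w :=
  le_trans ENNReal.ofReal_add_le (add_le_add_left (ofReal_split3 x y z) _)

lemma ofReal_add4 {x1 x2 x3 x4 : ℝ} (h1 : 0 ≤ x1) (h2 : 0 ≤ x2) (h3 : 0 ≤ x3) (h4 : 0 ≤ x4) :
    ENNReal.ofReal x1 + ENNReal.ofReal x2 + ENNReal.ofReal x3 + ENNReal.ofReal x4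
      = ENNReal.ofReal (x1 + x2 + x3 + x4) := by
  rw [← ENNReal.ofReal_add h1 h2, ← ENNReal.ofReal_add (by linarith) h3,
    ← ENNReal.ofReal_add (by linarith) h4]

lemma Jh_refl_abs (w : ℝ × ℝ → ℝ) :
    Jh (fun p => ENNReal.ofReal |w (refl2 p)|) = Jh (fun p => ENNReal.ofReal |w p|) :=
  Jh_refl (fun q => ENNReal.ofReal |w q|)

end ProjLipMore

/-- Lipschitz-type estimate for the bundle projection `P_{𝔹⁴} : HL(D) → A_i(𝔹⁴)`. -/
theorem proj_lipschitz_estimate (A B : HLElem) (hA : A.mem) (hB : B.mem) :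
    bergNormB A.k (A.proj - B.proj)
      ≤ 8 * (1 + L2D B.a + L2D B.b + L2D B.c + L2D B.d) * HLdist A B := by
  obtain ⟨hA1, hA2, hAT⟩ := hA
  obtain ⟨hB1, hB2, hBT⟩ := hB
  have hAk : Sph2 A.k := hAT.1
  have hAl : Sph2 A.l := hAT.2.1
  have hBk : Sph2 B.k := hBT.1
  have hBl : Sph2 B.l := hBT.2.1
  have hnAk : ‖A.k‖ = 1 := hAk.2
  have hnAl : ‖A.l‖ = 1 := hAl.2
  have hnBk : ‖B.k‖ = 1 := hBk.2
  have hnBl : ‖B.l‖ = 1 := hBl.2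
  -- continuity of the matrix entries
  have hcAa : ContinuousOn A.a unitDisk := hA1.1.1.1.continuousOn
  have hcAb : ContinuousOn A.b unitDisk := hA1.1.2.1.1.continuousOn
  have hcAc : ContinuousOn A.c unitDisk := hA2.1.1.1.continuousOn
  have hcAd : ContinuousOn A.d unitDisk := hA2.1.2.1.1.continuousOn
  have hcBa : ContinuousOn B.a unitDisk := hB1.1.1.1.continuousOn
  have hcBb : ContinuousOn B.b unitDisk := hB1.1.2.1.1.continuousOn
  have hcBc : ContinuousOn B.c unitDisk := hB2.1.1.1.continuousOn
  have hcBd : ContinuousOn B.d unitDisk := hB2.1.2.1.1.continuousOn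
  -- square integrability
  have hmBa : MemL2D B.a := hB1.2.1
  have hmBb : MemL2D B.b := hB1.2.2
  have hmBc : MemL2D B.c := hB2.2.1
  have hmBd : MemL2D B.d := hB2.2.2
  have hmAa : MemL2D A.a := hA1.2.1
  have hmAb : MemL2D A.b := hA1.2.2
  have hmAc : MemL2D A.c := hA2.2.1
  have hmAd : MemL2D A.d := hA2.2.2
  set δ : ℝ := Real.sqrt (‖A.k - B.k‖ ^ 2 + ‖A.l - B.l‖ ^ 2) with hδdef
  have hδ0 : 0 ≤ δ := Real.sqrt_nonneg _
  have hδ1 : ‖A.k - B.k‖ ≤ δ := by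
    rw [hδdef, Real.le_sqrt (norm_nonneg _) (by positivity)]
    nlinarith [sq_nonneg ‖A.l - B.l‖]
  have hδ2 : ‖A.l - B.l‖ ≤ δ := by
    rw [hδdef, Real.le_sqrt (norm_nonneg _) (by positivity)]
    nlinarith [sq_nonneg ‖A.k - B.k‖]
  -- the error function on the slice of `A.k`
  set E : ℝ × ℝ → ℍ := fun p =>
    (sliceFun A.a A.b A.c A.d A.k A.l p - sliceFun B.a B.b B.c B.d B.k B.l p)
      - (2⁻¹ : ℝ) • (A.k * (B.k - A.k) *
        (sliceFun B.a B.b B.c B.d B.k B.l (refl2 p)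
          - sliceFun B.a B.b B.c B.d B.k B.l p)) with hEdef
  have hkey : ∀ p : ℝ × ℝ, (A.proj - B.proj) ((p.1 : ℍ) + p.2 • A.k) = E p := by
    intro p
    simp only [Pi.sub_apply, HLElem.proj]
    rw [Pext_slice (sliceFun A.a A.b A.c A.d A.k A.l) hAk A.k p.1 p.2,
      Pext_slice (sliceFun B.a B.b B.c B.d B.k B.l) hAk B.k p.1 p.2]
    simp only [sub_self, mul_zero, zero_mul, smul_zero, add_zero, hEdef, refl2, Prod.mk.eta]
    rw [sub_add_eq_sub_sub]
  -- continuity of E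
  have hfcoe : ∀ (w : ℝ × ℝ → ℝ), ContinuousOn w unitDisk →
      ContinuousOn (fun p => ((w p : ℝ) : ℍ)) unitDisk := by
    intro w hw
    have h : (fun p => ((w p : ℝ) : ℍ)) = fun p => w p • (1 : ℍ) := by
      funext p; rw [← Quaternion.coe_mul_eq_smul, mul_one]
    rw [h]; exact hw.smul continuousOn_const
  have hgAcont : ContinuousOn (sliceFun A.a A.b A.c A.d A.k A.l) unitDisk := by
    unfold sliceFun
    exact (((hfcoe _ hcAa).add (hcAb.smul continuousOn_const)).add
      (hcAc.smul continuousOn_const)).add (hcAd.smul continuousOn_const)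
  have hgBcont : ContinuousOn (sliceFun B.a B.b B.c B.d B.k B.l) unitDisk := by
    unfold sliceFun
    exact (((hfcoe _ hcBa).add (hcBb.smul continuousOn_const)).add
      (hcBc.smul continuousOn_const)).add (hcBd.smul continuousOn_const)
  have hrefl_cont : Continuous refl2 := by unfold refl2; fun_prop
  have hmaps : Set.MapsTo refl2 unitDisk unitDisk := by
    intro p hp
    simpa [unitDisk, refl2] using hp
  have hgBrefl : ContinuousOn (fun p => sliceFun B.a B.b B.c B.d B.k B.l (refl2 p)) unitDisk :=
    hgBcont.comp hrefl_cont.continuousOn hmaps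
  have hEcont : ContinuousOn E unitDisk := by
    rw [hEdef]
    exact (hgAcont.sub hgBcont).sub
      ((continuousOn_const.mul (hgBrefl.sub hgBcont)).const_smul (2⁻¹ : ℝ))
  have hEsm : MeasureTheory.AEStronglyMeasurable E (MeasureTheory.volume.restrict unitDisk) :=
    hEcont.aestronglyMeasurable measurableSet_unitDisk
  -- the LHS as an `ENNReal` quantity
  have hLHS : bergNormB A.k (A.proj - B.proj) = (Jh (fun p => (‖E p‖₊ : ENNReal))).toReal := by
    unfold bergNormB bergNormSqB
    simp only [hkey]
    exact sqrt_integral_eq E hEsm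
  -- the three groups of summands
  set F1 : ℝ × ℝ → ENNReal := fun p =>
    ENNReal.ofReal |A.a p - B.a p| + ENNReal.ofReal |A.b p - B.b p|
      + ENNReal.ofReal |A.c p - B.c p| + ENNReal.ofReal |A.d p - B.d p| with hF1
  set F2 : ℝ × ℝ → ENNReal := fun p =>
    ENNReal.ofReal (3 * δ * |B.a p|) + ENNReal.ofReal (3 * δ * |B.b p|)
      + ENNReal.ofReal (3 * δ * |B.c p|) + ENNReal.ofReal (3 * δ * |B.d p|) with hF2
  set F3 : ℝ × ℝ → ENNReal := fun p =>
    ENNReal.ofReal (δ * |B.a (refl2 p)|) + ENNReal.ofReal (δ * |B.b (refl2 p)|)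
      + ENNReal.ofReal (δ * |B.c (refl2 p)|) + ENNReal.ofReal (δ * |B.d (refl2 p)|) with hF3
  -- pointwise bound
  have hpt : ∀ p : ℝ × ℝ, (‖E p‖₊ : ENNReal) ≤ F1 p + F2 p + F3 p := by
    intro p
    have hb : ‖E p‖ ≤ (|A.a p - B.a p| + |A.b p - B.b p| + |A.c p - B.c p| + |A.d p - B.d p|)
        + 3 * δ * (|B.a p| + |B.b p| + |B.c p| + |B.d p|)
        + δ * (|B.a (refl2 p)| + |B.b (refl2 p)| + |B.c (refl2 p)| + |B.d (refl2 p)|) := by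
      simp only [hEdef]
      exact norm_bound hnAk hnAl hnBk hnBl hδ1 hδ2 (A.a p) (A.b p) (A.c p) (A.d p)
        (B.a p) (B.b p) (B.c p) (B.d p)
        (B.a (refl2 p)) (B.b (refl2 p)) (B.c (refl2 p)) (B.d (refl2 p))
    calc (‖E p‖₊ : ENNReal) = ENNReal.ofReal ‖E p‖ := (ofReal_norm _).symm
      _ ≤ ENNReal.ofReal ((|A.a p - B.a p| + |A.b p - B.b p| + |A.c p - B.c p| + |A.d p - B.d p|)
          + 3 * δ * (|B.a p| + |B.b p| + |B.c p| + |B.d p|)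
          + δ * (|B.a (refl2 p)| + |B.b (refl2 p)| + |B.c (refl2 p)| + |B.d (refl2 p)|)) :=
        ENNReal.ofReal_le_ofReal hb
      _ ≤ ENNReal.ofReal (|A.a p - B.a p| + |A.b p - B.b p| + |A.c p - B.c p| + |A.d p - B.d p|)
          + ENNReal.ofReal (3 * δ * (|B.a p| + |B.b p| + |B.c p| + |B.d p|))
          + ENNReal.ofReal (δ * (|B.a (refl2 p)| + |B.b (refl2 p)| + |B.c (refl2 p)|
            + |B.d (refl2 p)|)) := ofReal_split3 _ _ _
      _ ≤ F1 p + F2 p + F3 p := by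
        refine add_le_add (add_le_add ?_ ?_) ?_
        · rw [hF1]; exact ofReal_split4 _ _ _ _
        · rw [hF2, show 3 * δ * (|B.a p| + |B.b p| + |B.c p| + |B.d p|)
            = 3 * δ * |B.a p| + 3 * δ * |B.b p| + 3 * δ * |B.c p| + 3 * δ * |B.d p| by ring]
          exact ofReal_split4 _ _ _ _
        · rw [hF3, show δ * (|B.a (refl2 p)| + |B.b (refl2 p)| + |B.c (refl2 p)| + |B.d (refl2 p)|)
            = δ * |B.a (refl2 p)| + δ * |B.b (refl2 p)| + δ * |B.c (refl2 p)|
              + δ * |B.d (refl2 p)| by ring]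
          exact ofReal_split4 _ _ _ _
  -- measurability of the summands
  have hM : ∀ (w : ℝ × ℝ → ℝ), ContinuousOn w unitDisk →
      AEMeasurable (fun p => ENNReal.ofReal (w p)) (MeasureTheory.volume.restrict unitDisk) :=
    fun w hw => (hw.aemeasurable measurableSet_unitDisk).ennreal_ofReal
  have hcBar : ContinuousOn (fun p => B.a (refl2 p)) unitDisk :=
    hcBa.comp hrefl_cont.continuousOn hmaps
  have hcBbr : ContinuousOn (fun p => B.b (refl2 p)) unitDisk :=
    hcBb.comp hrefl_cont.continuousOn hmaps
  have hcBcr : ContinuousOn (fun p => B.c (refl2 p)) unitDisk :=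
    hcBc.comp hrefl_cont.continuousOn hmaps
  have hcBdr : ContinuousOn (fun p => B.d (refl2 p)) unitDisk :=
    hcBd.comp hrefl_cont.continuousOn hmaps
  have hF1m : AEMeasurable F1 (MeasureTheory.volume.restrict unitDisk) := by
    rw [hF1]
    exact (((hM _ (hcAa.sub hcBa).abs).add (hM _ (hcAb.sub hcBb).abs)).add
      (hM _ (hcAc.sub hcBc).abs)).add (hM _ (hcAd.sub hcBd).abs)
  have hF2m : AEMeasurable F2 (MeasureTheory.volume.restrict unitDisk) := by
    rw [hF2]
    exact (((hM _ (continuousOn_const.mul hcBa.abs)).add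
      (hM _ (continuousOn_const.mul hcBb.abs))).add
      (hM _ (continuousOn_const.mul hcBc.abs))).add
      (hM _ (continuousOn_const.mul hcBd.abs))
  have hF3m : AEMeasurable F3 (MeasureTheory.volume.restrict unitDisk) := by
    rw [hF3]
    exact (((hM _ (continuousOn_const.mul hcBar.abs)).add
      (hM _ (continuousOn_const.mul hcBbr.abs))).add
      (hM _ (continuousOn_const.mul hcBcr.abs))).add
      (hM _ (continuousOn_const.mul hcBdr.abs))
  -- values of the twelve terms
  have hvAB : ∀ (v w : ℝ × ℝ → ℝ), ContinuousOn v unitDisk → ContinuousOn w unitDisk →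
      MemL2D v → MemL2D w →
      Jh (fun p => ENNReal.ofReal |v p - w p|) = ENNReal.ofReal (L2D (v - w)) := by
    intro v w hcv hcw hv hw
    exact Jh_ofReal_abs_eq ((hcv.sub hcw).aemeasurable measurableSet_unitDisk)
      (memL2D_sub hv hw hcv hcw)
  have hvB : ∀ (w : ℝ × ℝ → ℝ), ContinuousOn w unitDisk → MemL2D w →
      Jh (fun p => ENNReal.ofReal |w p|) = ENNReal.ofReal (L2D w) := by
    intro w hcw hw
    exact Jh_ofReal_abs_eq (hcw.aemeasurable measurableSet_unitDisk) hw
  have hscal : ∀ (c : ℝ), 0 ≤ c → ∀ (w : ℝ × ℝ → ℝ),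
      Jh (fun p => ENNReal.ofReal (c * |w p|))
        = ENNReal.ofReal c * Jh (fun p => ENNReal.ofReal |w p|) := by
    intro c hc w
    rw [show (fun p => ENNReal.ofReal (c * |w p|))
        = fun p => ENNReal.ofReal c * ENNReal.ofReal |w p| from
      funext fun p => ENNReal.ofReal_mul hc]
    exact Jh_const_mul _ ENNReal.ofReal_ne_top _
  -- bound each group
  have nAa : 0 ≤ L2D (A.a - B.a) := Real.sqrt_nonneg _
  have nAb : 0 ≤ L2D (A.b - B.b) := Real.sqrt_nonneg _
  have nAc : 0 ≤ L2D (A.c - B.c) := Real.sqrt_nonneg _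
  have nAd : 0 ≤ L2D (A.d - B.d) := Real.sqrt_nonneg _
  have nBa : 0 ≤ L2D B.a := Real.sqrt_nonneg _
  have nBb : 0 ≤ L2D B.b := Real.sqrt_nonneg _
  have nBc : 0 ≤ L2D B.c := Real.sqrt_nonneg _
  have nBd : 0 ≤ L2D B.d := Real.sqrt_nonneg _
  have h3δ : (0:ℝ) ≤ 3 * δ := by linarith
  have hJF1 : Jh F1 ≤ ENNReal.ofReal (L2D (A.a - B.a) + L2D (A.b - B.b)
      + L2D (A.c - B.c) + L2D (A.d - B.d)) := by
    rw [hF1]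
    refine le_trans (Jh_add4 _ _ _ _ (hM _ (hcAa.sub hcBa).abs) (hM _ (hcAb.sub hcBb).abs)
      (hM _ (hcAc.sub hcBc).abs) (hM _ (hcAd.sub hcBd).abs)) ?_
    rw [hvAB _ _ hcAa hcBa hmAa hmBa, hvAB _ _ hcAb hcBb hmAb hmBb,
      hvAB _ _ hcAc hcBc hmAc hmBc, hvAB _ _ hcAd hcBd hmAd hmBd,
      ofReal_add4 nAa nAb nAc nAd]
  have hJF2 : Jh F2 ≤ ENNReal.ofReal (3 * δ * L2D B.a + 3 * δ * L2D B.b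
      + 3 * δ * L2D B.c + 3 * δ * L2D B.d) := by
    rw [hF2]
    refine le_trans (Jh_add4 _ _ _ _ (hM _ (continuousOn_const.mul hcBa.abs))
      (hM _ (continuousOn_const.mul hcBb.abs)) (hM _ (continuousOn_const.mul hcBc.abs))
      (hM _ (continuousOn_const.mul hcBd.abs))) ?_
    rw [hscal _ h3δ B.a, hscal _ h3δ B.b, hscal _ h3δ B.c, hscal _ h3δ B.d,
      hvB _ hcBa hmBa, hvB _ hcBb hmBb, hvB _ hcBc hmBc, hvB _ hcBd hmBd,
      ← ENNReal.ofReal_mul h3δ, ← ENNReal.ofReal_mul h3δ, ← ENNReal.ofReal_mul h3δ,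
      ← ENNReal.ofReal_mul h3δ,
      ofReal_add4 (mul_nonneg h3δ nBa) (mul_nonneg h3δ nBb) (mul_nonneg h3δ nBc) (mul_nonneg h3δ nBd)]
  have hJF3 : Jh F3 ≤ ENNReal.ofReal (δ * L2D B.a + δ * L2D B.b
      + δ * L2D B.c + δ * L2D B.d) := by
    rw [hF3]
    refine le_trans (Jh_add4 _ _ _ _ (hM _ (continuousOn_const.mul hcBar.abs))
      (hM _ (continuousOn_const.mul hcBbr.abs)) (hM _ (continuousOn_const.mul hcBcr.abs))
      (hM _ (continuousOn_const.mul hcBdr.abs))) ?_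
    rw [hscal _ hδ0 (fun p => B.a (refl2 p)), hscal _ hδ0 (fun p => B.b (refl2 p)),
      hscal _ hδ0 (fun p => B.c (refl2 p)), hscal _ hδ0 (fun p => B.d (refl2 p)),
      Jh_refl_abs B.a, Jh_refl_abs B.b, Jh_refl_abs B.c, Jh_refl_abs B.d,
      hvB _ hcBa hmBa, hvB _ hcBb hmBb, hvB _ hcBc hmBc, hvB _ hcBd hmBd,
      ← ENNReal.ofReal_mul hδ0, ← ENNReal.ofReal_mul hδ0, ← ENNReal.ofReal_mul hδ0,
      ← ENNReal.ofReal_mul hδ0,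
      ofReal_add4 (mul_nonneg hδ0 nBa) (mul_nonneg hδ0 nBb) (mul_nonneg hδ0 nBc) (mul_nonneg hδ0 nBd)]
  -- total bound in ENNReal
  set T : ℝ := (L2D (A.a - B.a) + L2D (A.b - B.b) + L2D (A.c - B.c) + L2D (A.d - B.d))
    + (3 * δ * L2D B.a + 3 * δ * L2D B.b + 3 * δ * L2D B.c + 3 * δ * L2D B.d)
    + (δ * L2D B.a + δ * L2D B.b + δ * L2D B.c + δ * L2D B.d) with hTdef
  have hJtot : Jh (fun p => (‖E p‖₊ : ENNReal)) ≤ ENNReal.ofReal T := by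
    refine le_trans (Jh_mono hpt) ?_
    refine le_trans (Jh_add3 F1 F2 F3 hF1m hF2m hF3m) ?_
    refine le_trans (add_le_add (add_le_add hJF1 hJF2) hJF3) ?_
    refine le_of_eq ?_
    have hX0 : 0 ≤ L2D (A.a - B.a) + L2D (A.b - B.b) + L2D (A.c - B.c) + L2D (A.d - B.d) := by
      linarith
    have hY0 : 0 ≤ 3 * δ * L2D B.a + 3 * δ * L2D B.b + 3 * δ * L2D B.c + 3 * δ * L2D B.d := by
      have m1 : 0 ≤ 3 * δ * L2D B.a := mul_nonneg h3δ nBa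
      have m2 : 0 ≤ 3 * δ * L2D B.b := mul_nonneg h3δ nBb
      have m3 : 0 ≤ 3 * δ * L2D B.c := mul_nonneg h3δ nBc
      have m4 : 0 ≤ 3 * δ * L2D B.d := mul_nonneg h3δ nBd
      linarith
    have hZ0 : 0 ≤ δ * L2D B.a + δ * L2D B.b + δ * L2D B.c + δ * L2D B.d := by
      have m1 : 0 ≤ δ * L2D B.a := mul_nonneg hδ0 nBa
      have m2 : 0 ≤ δ * L2D B.b := mul_nonneg hδ0 nBb
      have m3 : 0 ≤ δ * L2D B.c := mul_nonneg hδ0 nBc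
      have m4 : 0 ≤ δ * L2D B.d := mul_nonneg hδ0 nBd
      linarith
    rw [← ENNReal.ofReal_add hX0 hY0, ← ENNReal.ofReal_add (by linarith) hZ0, hTdef]
  -- conclude
  have hT0 : 0 ≤ T := by
    rw [hTdef]
    have p1 := mul_nonneg h3δ nBa
    have p2 := mul_nonneg h3δ nBb
    have p3 := mul_nonneg h3δ nBc
    have p4 := mul_nonneg h3δ nBd
    have q1 := mul_nonneg hδ0 nBa
    have q2 := mul_nonneg hδ0 nBb
    have q3 := mul_nonneg hδ0 nBc
    have q4 := mul_nonneg hδ0 nBd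
    nlinarith
  rw [hLHS]
  have hTR : (Jh (fun p => (‖E p‖₊ : ENNReal))).toReal ≤ T :=
    le_trans (ENNReal.toReal_mono ENNReal.ofReal_ne_top hJtot)
      (le_of_eq (ENNReal.toReal_ofReal hT0))
  refine le_trans hTR ?_
  unfold HLdist
  rw [← hδdef, hTdef]
  have hSL : 0 ≤ L2D B.a + L2D B.b + L2D B.c + L2D B.d := by linarith
  have hSd : 0 ≤ L2D (A.a - B.a) + L2D (A.b - B.b) + L2D (A.c - B.c) + L2D (A.d - B.d) := by
    linarith
  nlinarith [mul_nonneg hSL hSd, mul_nonneg hSL hδ0, hSd, hδ0, hSL]
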